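/- Suppose y ≤ w in S_d and i is cancellable for [y,w] (i.e., y(i) = w(i) and inv_i(y) = inv_i(w)). Then the map x ↦ x^{î} (deleting position i and value y(i), and renumbering order-preservingly) is an isomorphism of posets from the Bruhat interval [y,w] in S_d onto the Bruhat interval [y^{î}, w^{î}] in S_{d-1}, and it reduces all lengths by the same amount. -/

import Mathlib

open Equiv Finset

/-- `inv_i(w) = |{i' < i : w(i') > w(i)}|`. -/
def invi {d : ℕ} (w : Perm (Fin d)) (i : Fin d) : ℕ :=
  (Finset.univ.filter (fun i' => i' < i ∧ w i < w i')).card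

/-- `Inv_i(w) = |{i' > i : w(i') < w(i)}|`. -/
def Invi {d : ℕ} (w : Perm (Fin d)) (i : Fin d) : ℕ :=
  (Finset.univ.filter (fun i' => i < i' ∧ w i' < w i)).card

/-- `s` is one of the standard Coxeter generators (adjacent transpositions) of `S_d`. -/
def IsAdjTrans {d : ℕ} (s : Perm (Fin d)) : Prop :=
  ∃ (i : ℕ) (h : i + 1 < d), s = Equiv.swap ⟨i, Nat.lt_of_succ_lt h⟩ ⟨i + 1, h⟩

/-- Coxeter length: minimal length of an expression of `w` as a product of
adjacent transpositions. -/
noncomputable def len {d : ℕ} (w : Perm (Fin d)) : ℕ :=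
  sInf {n | ∃ l : List (Perm (Fin d)),
    l.length = n ∧ (∀ s ∈ l, IsAdjTrans s) ∧ l.prod = w}

/-- Bruhat order: `y ≤ w` iff some reduced word for `w` has a subword with product `y`. -/
def BruhatLE {d : ℕ} (y w : Perm (Fin d)) : Prop :=
  ∃ l : List (Perm (Fin d)), (∀ s ∈ l, IsAdjTrans s) ∧ l.length = len w ∧ l.prod = w ∧
    ∃ l' : List (Perm (Fin d)), List.Sublist l' l ∧ l'.prod = y

/-- `x'` is the permutation `x^{î}` of `S_{d-1}` obtained from `x` by deleting position `i`
and value `x i`, renumbering order-preservingly: `x ∘ σ_i = σ_{x i} ∘ x'`. -/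
def IsHat {d : ℕ} (i : Fin (d + 1)) (x : Perm (Fin (d + 1))) (x' : Perm (Fin d)) : Prop :=
  ∀ j : Fin d, x (i.succAbove j) = (x i).succAbove (x' j)


section CancelAux
variable {n : ℕ}

section Aux
variable {n : ℕ}

/-- rank function: number of `i' < a` with `x i' < b` (thresholds in ℕ). -/
def rnk (x : Perm (Fin n)) (a b : ℕ) : ℕ :=
  (univ.filter fun i' : Fin n => i'.val < a ∧ (x i').val < b).card

/-- Ehresmann order: `Ehr y w` means `y ≤ w` in Bruhat order. -/
def Ehr (y w : Perm (Fin n)) : Prop := ∀ a b, rnk w a b ≤ rnk y a b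

def invn (x : Perm (Fin n)) : ℕ :=
  (univ.filter fun p : Fin n × Fin n => p.1 < p.2 ∧ x p.2 < x p.1).card

lemma rnk_succ (x : Perm (Fin n)) (a b : ℕ) :
    rnk x (a+1) b = rnk x a b +
      (if h : a < n then (if (x ⟨a, h⟩).val < b then 1 else 0) else 0) := by
  unfold rnk
  split_ifs with h hv
  · rw [show (univ.filter fun i' : Fin n => i'.val < a+1 ∧ (x i').val < b)
        = insert ⟨a, h⟩ (univ.filter fun i' : Fin n => i'.val < a ∧ (x i').val < b) by
      ext i'
      simp only [mem_filter, mem_univ, true_and, mem_insert]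
      constructor
      · rintro ⟨h1, h2⟩
        rcases Nat.lt_or_ge i'.val a with h3 | h3
        · exact Or.inr ⟨h3, h2⟩
        · exact Or.inl (Fin.ext (show i'.val = a by omega))
      · rintro (rfl | ⟨h1, h2⟩)
        · exact ⟨Nat.lt_succ_self _, hv⟩
        · exact ⟨Nat.lt_succ_of_lt h1, h2⟩]
    rw [card_insert_of_notMem (by simp)]
  · rw [Nat.add_zero]
    have e : (univ.filter fun i' : Fin n => i'.val < a+1 ∧ (x i').val < b)
        = (univ.filter fun i' : Fin n => i'.val < a ∧ (x i').val < b) := by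
      ext i'
      simp only [mem_filter, mem_univ, true_and]
      constructor
      · rintro ⟨h1, h2⟩
        refine ⟨?_, h2⟩
        rcases Nat.lt_or_ge i'.val a with h3 | h3
        · exact h3
        · exfalso
          have : i' = ⟨a, h⟩ := Fin.ext (show i'.val = a by omega)
          subst this; exact hv h2
      · rintro ⟨h1, h2⟩; exact ⟨Nat.lt_succ_of_lt h1, h2⟩
    rw [e]; omega
  · rw [Nat.add_zero]
    have e : (univ.filter fun i' : Fin n => i'.val < a+1 ∧ (x i').val < b)
        = (univ.filter fun i' : Fin n => i'.val < a ∧ (x i').val < b) := by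
      ext i'
      simp only [mem_filter, mem_univ, true_and]
      have := i'.isLt
      constructor <;> rintro ⟨h1, h2⟩ <;> exact ⟨by omega, h2⟩
    rw [e]; omega

lemma rnk_zero (x : Perm (Fin n)) (b : ℕ) : rnk x 0 b = 0 := by
  unfold rnk
  rw [card_eq_zero]
  apply filter_eq_empty_iff.mpr
  intro i' _
  simp

lemma card_filter_val_lt (c : ℕ) :
    ((univ : Finset (Fin n)).filter fun i' => i'.val < c).card = min c n := by
  have e : ((univ : Finset (Fin n)).filter fun i' => i'.val < c)
      = (Finset.range (min c n)).attachFin (fun m hm => by simp at hm; omega) := by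
    ext i'
    have := i'.isLt
    simp only [mem_filter, mem_univ, true_and, Finset.mem_attachFin, Finset.mem_range]
    omega
  rw [e, Finset.card_attachFin, Finset.card_range]

lemma card_filter_apply_val_lt (x : Perm (Fin n)) (c : ℕ) :
    ((univ : Finset (Fin n)).filter fun i' => (x i').val < c).card = min c n := by
  rw [← card_filter_val_lt (n := n) c]
  apply Finset.card_bij (fun i' _ => x i')
  · intro i' hi'
    simp only [mem_filter, mem_univ, true_and] at hi' ⊢
    exact hi'
  · intro a ha b hb hab
    exact x.injective hab
  · intro v hv
    refine ⟨x.symm v, ?_, by simp⟩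
    simp only [mem_filter, mem_univ, true_and] at hv ⊢
    simpa using hv

lemma rnk_le_left (x : Perm (Fin n)) (a b : ℕ) : rnk x a b ≤ a := by
  calc rnk x a b ≤ ((univ : Finset (Fin n)).filter fun i' => i'.val < a).card := by
        apply card_le_card; intro i' hi'
        simp only [mem_filter, mem_univ, true_and] at hi' ⊢
        exact hi'.1
    _ ≤ a := by rw [card_filter_val_lt]; omega

lemma rnk_le_right (x : Perm (Fin n)) (a b : ℕ) : rnk x a b ≤ b := by
  calc rnk x a b ≤ ((univ : Finset (Fin n)).filter fun i' => (x i').val < b).card := by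
        apply card_le_card; intro i' hi'
        simp only [mem_filter, mem_univ, true_and] at hi' ⊢
        exact hi'.2
    _ ≤ b := by rw [card_filter_apply_val_lt]; omega

lemma perm_eq_of_rnk_eq {x z : Perm (Fin n)} (h : ∀ a b, rnk x a b = rnk z a b) : x = z := by
  apply Equiv.ext
  intro i'
  have key : ∀ b, ((x i').val < b ↔ (z i').val < b) := by
    intro b
    have h1 := rnk_succ x i'.val b
    have h2 := rnk_succ z i'.val b
    rw [dif_pos i'.isLt] at h1 h2
    simp only [Fin.eta] at h1 h2
    rw [h _ b, h _ b] at h1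
    constructor
    · intro hlt; by_contra hc
      rw [if_pos hlt] at h1; rw [if_neg hc] at h2; omega
    · intro hlt; by_contra hc
      rw [if_pos hlt] at h2; rw [if_neg hc] at h1; omega
  have b1 := key ((x i').val + 1)
  have b2 := key ((z i').val + 1)
  exact Fin.ext (by omega)

end Aux

lemma swap_val {k : ℕ} (hk : k + 1 < n) (i' : Fin n) :
    ((Equiv.swap (⟨k, Nat.lt_of_succ_lt hk⟩ : Fin n) ⟨k+1, hk⟩) i').val
      = if i'.val = k then k+1 else if i'.val = k+1 then k else i'.val := by
  rcases eq_or_ne i' ⟨k, Nat.lt_of_succ_lt hk⟩ with rfl | h1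
  · rw [Equiv.swap_apply_left]; simp
  · rcases eq_or_ne i' ⟨k+1, hk⟩ with rfl | h2
    · rw [Equiv.swap_apply_right]; simp
    · rw [Equiv.swap_apply_of_ne_of_ne h1 h2]
      have e1 : i'.val ≠ k := fun h => h1 (Fin.ext h)
      have e2 : i'.val ≠ k+1 := fun h => h2 (Fin.ext h)
      rw [if_neg e1, if_neg e2]

lemma rnk_mul_swap_le {k : ℕ} (hk : k + 1 < n) (x : Perm (Fin n)) (a b : ℕ) (ha : a ≤ k) :
    rnk (x * Equiv.swap (⟨k, Nat.lt_of_succ_lt hk⟩ : Fin n) ⟨k+1, hk⟩) a b = rnk x a b := by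
  unfold rnk
  congr 1
  apply Finset.filter_congr
  intro i' _
  have := i'.isLt
  by_cases h1 : i'.val < a
  · have : (Equiv.swap (⟨k, Nat.lt_of_succ_lt hk⟩ : Fin n) ⟨k+1, hk⟩) i' = i' := by
      apply Equiv.swap_apply_of_ne_of_ne
      · exact fun h => by rw [h] at h1; simp at h1; omega
      · exact fun h => by rw [h] at h1; simp at h1; omega
    rw [Perm.mul_apply, this]
  · simp [h1]

lemma rnk_mul_swap_ne {k : ℕ} (hk : k + 1 < n) (x : Perm (Fin n)) (a b : ℕ) (ha : a ≠ k + 1) :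
    rnk (x * Equiv.swap (⟨k, Nat.lt_of_succ_lt hk⟩ : Fin n) ⟨k+1, hk⟩) a b = rnk x a b := by
  set s := Equiv.swap (⟨k, Nat.lt_of_succ_lt hk⟩ : Fin n) ⟨k+1, hk⟩ with hs
  rcases Nat.lt_or_ge a (k+1) with h | h
  · exact rnk_mul_swap_le hk x a b (by omega)
  · -- a ≥ k + 2
    have base : rnk (x * s) (k+2) b = rnk x (k+2) b := by
      have e1 := rnk_succ (x * s) (k+1) b
      have e2 := rnk_succ (x * s) k b
      have e3 := rnk_succ x (k+1) b
      have e4 := rnk_succ x k b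
      rw [dif_pos hk] at e1 e3
      rw [dif_pos (Nat.lt_of_succ_lt hk)] at e2 e4
      have v1 : (x * s) ⟨k+1, hk⟩ = x ⟨k, Nat.lt_of_succ_lt hk⟩ := by
        rw [Perm.mul_apply, hs, Equiv.swap_apply_right]
      have v2 : (x * s) ⟨k, Nat.lt_of_succ_lt hk⟩ = x ⟨k+1, hk⟩ := by
        rw [Perm.mul_apply, hs, Equiv.swap_apply_left]
      rw [v1] at e1; rw [v2] at e2
      have e5 := rnk_mul_swap_le hk x k b (le_refl k)
      rw [← hs] at e5
      rw [e1, e2, e3, e4, e5]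
      split_ifs <;> omega
    obtain ⟨m, rfl⟩ : ∃ m, a = (k+2) + m := ⟨a - (k+2), by omega⟩
    clear h ha
    induction m with
    | zero => exact base
    | succ m ih =>
      have e1 := rnk_succ (x * s) (k+2+m) b
      have e2 := rnk_succ x (k+2+m) b
      by_cases hm : k+2+m < n
      · rw [dif_pos hm] at e1 e2
        have v : (x * s) ⟨k+2+m, hm⟩ = x ⟨k+2+m, hm⟩ := by
          rw [Perm.mul_apply, hs]
          rw [Equiv.swap_apply_of_ne_of_ne]
          · exact fun h => by have := congrArg Fin.val h; simp at this; omega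
          · exact fun h => by have := congrArg Fin.val h; simp at this; omega
        rw [v] at e1
        rw [show k+2+(m+1) = (k+2+m)+1 by omega, e1, e2, ih]
      · rw [dif_neg hm] at e1 e2
        rw [show k+2+(m+1) = (k+2+m)+1 by omega, e1, e2, ih]

lemma rnk_mul_swap_mid {k : ℕ} (hk : k + 1 < n) (x : Perm (Fin n)) (b : ℕ) :
    rnk (x * Equiv.swap (⟨k, Nat.lt_of_succ_lt hk⟩ : Fin n) ⟨k+1, hk⟩) (k+1) b
      = rnk x k b + (if (x ⟨k+1, hk⟩).val < b then 1 else 0) := by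
  set s := Equiv.swap (⟨k, Nat.lt_of_succ_lt hk⟩ : Fin n) ⟨k+1, hk⟩ with hs
  have e1 := rnk_succ (x * s) k b
  rw [dif_pos (Nat.lt_of_succ_lt hk)] at e1
  have v2 : (x * s) ⟨k, Nat.lt_of_succ_lt hk⟩ = x ⟨k+1, hk⟩ := by
    rw [Perm.mul_apply, hs, Equiv.swap_apply_left]
  rw [v2] at e1
  rw [e1, rnk_mul_swap_le hk x k b (le_refl k)]

section Lift
variable {k : ℕ} (hk : k + 1 < n)

lemma ehr_refl (x : Perm (Fin n)) : Ehr x x := fun _ _ => le_refl _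

lemma ehr_trans {x y z : Perm (Fin n)} (h1 : Ehr x y) (h2 : Ehr y z) : Ehr x z :=
  fun a b => le_trans (h2 a b) (h1 a b)

lemma ehr_L1 {u v : Perm (Fin n)}
    (hv : (v ⟨k, Nat.lt_of_succ_lt hk⟩).val < (v ⟨k+1, hk⟩).val) (h : Ehr u v) :
    Ehr u (v * Equiv.swap (⟨k, Nat.lt_of_succ_lt hk⟩ : Fin n) ⟨k+1, hk⟩) := by
  intro a b
  rcases eq_or_ne a (k+1) with rfl | ha
  · rw [rnk_mul_swap_mid hk]
    have h1 := h (k+1) b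
    have ev1 := rnk_succ v k b
    rw [dif_pos (Nat.lt_of_succ_lt hk)] at ev1
    split_ifs at * <;> omega
  · rw [rnk_mul_swap_ne hk _ _ _ ha]; exact h a b

lemma ehr_L2 {u v : Perm (Fin n)}
    (hv : (v ⟨k, Nat.lt_of_succ_lt hk⟩).val < (v ⟨k+1, hk⟩).val) (h : Ehr u v) :
    Ehr (u * Equiv.swap (⟨k, Nat.lt_of_succ_lt hk⟩ : Fin n) ⟨k+1, hk⟩)
      (v * Equiv.swap (⟨k, Nat.lt_of_succ_lt hk⟩ : Fin n) ⟨k+1, hk⟩) := by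
  intro a b
  rcases eq_or_ne a (k+1) with rfl | ha
  · rw [rnk_mul_swap_mid hk, rnk_mul_swap_mid hk]
    have h0 := h k b
    have h1 := h (k+1) b
    have h2 := h (k+1+1) b
    have eu1 := rnk_succ u k b
    have eu2 := rnk_succ u (k+1) b
    have ev1 := rnk_succ v k b
    have ev2 := rnk_succ v (k+1) b
    rw [dif_pos (Nat.lt_of_succ_lt hk)] at eu1 ev1
    rw [dif_pos hk] at eu2 ev2
    split_ifs at * <;> omega
  · rw [rnk_mul_swap_ne hk _ _ _ ha, rnk_mul_swap_ne hk _ _ _ ha]; exact h a b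

lemma ehr_L3 {y w : Perm (Fin n)}
    (hy : (y ⟨k, Nat.lt_of_succ_lt hk⟩).val < (y ⟨k+1, hk⟩).val) (h : Ehr y w) :
    Ehr y (w * Equiv.swap (⟨k, Nat.lt_of_succ_lt hk⟩ : Fin n) ⟨k+1, hk⟩) := by
  intro a b
  rcases eq_or_ne a (k+1) with rfl | ha
  · rw [rnk_mul_swap_mid hk]
    have h0 := h k b
    have h1 := h (k+1) b
    have h2 := h (k+1+1) b
    have eu1 := rnk_succ y k b
    have eu2 := rnk_succ y (k+1) b
    have ev1 := rnk_succ w k b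
    have ev2 := rnk_succ w (k+1) b
    rw [dif_pos (Nat.lt_of_succ_lt hk)] at eu1 ev1
    rw [dif_pos hk] at eu2 ev2
    split_ifs at * <;> omega
  · rw [rnk_mul_swap_ne hk _ _ _ ha]; exact h a b

lemma ehr_L4 {y w : Perm (Fin n)}
    (hy : (y ⟨k+1, hk⟩).val < (y ⟨k, Nat.lt_of_succ_lt hk⟩).val) (h : Ehr y w) :
    Ehr (y * Equiv.swap (⟨k, Nat.lt_of_succ_lt hk⟩ : Fin n) ⟨k+1, hk⟩)
      (w * Equiv.swap (⟨k, Nat.lt_of_succ_lt hk⟩ : Fin n) ⟨k+1, hk⟩) := by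
  intro a b
  rcases eq_or_ne a (k+1) with rfl | ha
  · rw [rnk_mul_swap_mid hk, rnk_mul_swap_mid hk]
    have h0 := h k b
    have h1 := h (k+1) b
    have h2 := h (k+1+1) b
    have eu1 := rnk_succ y k b
    have eu2 := rnk_succ y (k+1) b
    have ev1 := rnk_succ w k b
    have ev2 := rnk_succ w (k+1) b
    rw [dif_pos (Nat.lt_of_succ_lt hk)] at eu1 ev1
    rw [dif_pos hk] at eu2 ev2
    split_ifs at * <;> omega
  · rw [rnk_mul_swap_ne hk _ _ _ ha, rnk_mul_swap_ne hk _ _ _ ha]; exact h a b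

end Lift

lemma invn_one : invn (1 : Perm (Fin n)) = 0 := by
  unfold invn
  rw [card_eq_zero]
  apply filter_eq_empty_iff.mpr
  intro p _
  rintro ⟨h1, h2⟩
  simp only [Perm.one_apply] at h2
  exact absurd h1 (not_lt_of_gt h2)

lemma swap_val' (K K1 i' : Fin n) :
    ((Equiv.swap K K1) i').val
      = if i'.val = K.val then K1.val else if i'.val = K1.val then K.val else i'.val := by
  rcases eq_or_ne i' K with rfl | h1
  · rw [Equiv.swap_apply_left, if_pos rfl]
  · rcases eq_or_ne i' K1 with rfl | h2
    · rw [Equiv.swap_apply_right]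
      by_cases hKK : i'.val = K.val
      · rw [if_pos hKK]; omega
      · rw [if_neg hKK, if_pos rfl]
    · rw [Equiv.swap_apply_of_ne_of_ne h1 h2,
        if_neg (fun h => h1 (Fin.ext h)), if_neg (fun h => h2 (Fin.ext h))]

lemma invn_mul_swap_asc' (x : Perm (Fin n)) (K K1 : Fin n) (hadj : K.val + 1 = K1.val)
    (hx : (x K).val < (x K1).val) :
    invn (x * Equiv.swap K K1) = invn x + 1 := by
  set s := Equiv.swap K K1 with hs
  have hss : ∀ q : Fin n, s (s q) = q := fun q => Equiv.swap_apply_self _ _ q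
  have hsK : s K = K1 := Equiv.swap_apply_left _ _
  have hsK1 : s K1 = K := Equiv.swap_apply_right _ _
  have hA : invn (x * s)
      = (univ.filter fun p : Fin n × Fin n => p.1 < p.2 ∧ (x * s) p.2 < (x * s) p.1).card := rfl
  have hB : invn x
      = (univ.filter fun p : Fin n × Fin n => p.1 < p.2 ∧ x p.2 < x p.1).card := rfl
  set A := univ.filter fun p : Fin n × Fin n => p.1 < p.2 ∧ (x * s) p.2 < (x * s) p.1 with hA'
  set B := univ.filter fun p : Fin n × Fin n => p.1 < p.2 ∧ x p.2 < x p.1 with hB'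
  have memA : (K, K1) ∈ A := by
    rw [hA', mem_filter]
    exact ⟨mem_univ _, show K.val < K1.val by omega,
      show (x (s K1)).val < (x (s K)).val by rw [hsK, hsK1]; exact hx⟩
  have memB : (K, K1) ∉ B := by
    rw [hB', mem_filter]
    rintro ⟨-, -, h2⟩
    exact absurd (show (x K1).val < (x K).val from h2) (by omega)
  have hbij : (A.erase (K, K1)).card = B.card := by
    apply Finset.card_bij (fun p _ => (s p.1, s p.2))
    · rintro ⟨p1, p2⟩ hp
      rw [Finset.mem_erase, hA', mem_filter] at hp
      obtain ⟨hne, -, hlt, hinv⟩ := hp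
      have hlt' : p1.val < p2.val := hlt
      have hnkk : ¬(p1.val = K.val ∧ p2.val = K1.val) := by
        rintro ⟨e1, e2⟩
        exact hne (Prod.ext (Fin.ext e1) (Fin.ext e2))
      have hv1 := swap_val' K K1 p1
      have hv2 := swap_val' K K1 p2
      rw [hB', mem_filter]
      refine ⟨mem_univ _, ?_, ?_⟩
      · show (s p1).val < (s p2).val
        rw [hv1, hv2]
        split_ifs <;> omega
      · exact hinv
    · rintro ⟨p1, p2⟩ hp ⟨q1, q2⟩ hq hpq
      rw [Prod.ext_iff] at hpq ⊢
      exact ⟨s.injective hpq.1, s.injective hpq.2⟩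
    · rintro ⟨q1, q2⟩ hq
      rw [hB', mem_filter] at hq
      obtain ⟨-, hlt, hinv⟩ := hq
      have hlt' : q1.val < q2.val := hlt
      have hq1K : ¬(q1.val = K.val ∧ q2.val = K1.val) := by
        rintro ⟨e1, e2⟩
        have e1' : q1 = K := Fin.ext e1
        have e2' : q2 = K1 := Fin.ext e2
        subst e1'; subst e2'
        exact absurd (show (x q2).val < (x q1).val from hinv) (by omega)
      refine ⟨(s q1, s q2), ?_, ?_⟩
      · rw [Finset.mem_erase]
        constructor
        · rintro hEq
          rw [Prod.ext_iff] at hEq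
          have e1 : s q1 = K := hEq.1
          have e2 : s q2 = K1 := hEq.2
          have e1' : q1 = K1 := by rw [← hss q1, e1, hsK]
          have e2' : q2 = K := by rw [← hss q2, e2, hsK1]
          subst e1'; subst e2'
          exact absurd hlt' (by omega)
        · rw [hA', mem_filter]
          have hv1 := swap_val' K K1 q1
          have hv2 := swap_val' K K1 q2
          refine ⟨mem_univ _, ?_, ?_⟩
          · show (s q1).val < (s q2).val
            rw [hv1, hv2]
            split_ifs <;> omega
          · show (x (s (s q2))).val < (x (s (s q1))).val
            rw [hss, hss]
            exact hinv
      · simp only [hss]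
  have cardA : A.card = (A.erase (K, K1)).card + 1 := by
    rw [Finset.card_erase_of_mem memA]
    have : 0 < A.card := Finset.card_pos.mpr ⟨_, memA⟩
    omega
  rw [hA, hB]
  omega

lemma invn_mul_swap_desc' (x : Perm (Fin n)) (K K1 : Fin n) (hadj : K.val + 1 = K1.val)
    (hx : (x K1).val < (x K).val) :
    invn (x * Equiv.swap K K1) + 1 = invn x := by
  have h1 : (((x * Equiv.swap K K1) K)).val < ((x * Equiv.swap K K1) K1).val := by
    show (x (Equiv.swap K K1 K)).val < (x (Equiv.swap K K1 K1)).val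
    rw [Equiv.swap_apply_left, Equiv.swap_apply_right]
    exact hx
  have h2 := invn_mul_swap_asc' (x * Equiv.swap K K1) K K1 hadj h1
  rw [mul_assoc, Equiv.swap_mul_self, mul_one] at h2
  omega

lemma eq_one_of_no_descent (x : Perm (Fin n))
    (h : ∀ (k : ℕ) (hk : k + 1 < n), (x ⟨k, Nat.lt_of_succ_lt hk⟩).val < (x ⟨k+1, hk⟩).val) :
    x = 1 := by
  rcases n with - | m
  · exact Equiv.ext fun i => i.elim0
  have sm : StrictMono x := by
    rw [Fin.strictMono_iff_lt_succ]
    intro j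
    have hj : j.val + 1 < m + 1 := by omega
    have := h j.val hj
    rw [Fin.lt_def]
    exact this
  have sm2 : StrictMono (x.symm : Fin (m+1) → Fin (m+1)) := by
    intro a b hab
    by_contra hc
    push_neg at hc
    rcases eq_or_lt_of_le hc with heq | hlt
    · rw [x.symm.injective heq] at hab; exact lt_irrefl _ hab
    · have := sm hlt
      rw [Equiv.apply_symm_apply, Equiv.apply_symm_apply] at this
      exact absurd hab (not_lt_of_gt this)
  apply Equiv.ext
  intro i
  have inst : WellFoundedLT (Fin (m+1)) := inferInstance
  have h1 : i ≤ x i := (StrictMono.le_apply sm : i ≤ x i)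
  have h2 : i ≤ x.symm i := (StrictMono.le_apply sm2 : i ≤ x.symm i)
  have h3 : x i ≤ x (x.symm i) := sm.monotone h2
  rw [Equiv.apply_symm_apply] at h3
  exact le_antisymm h3 h1

lemma invn_le_of_word (l : List (Perm (Fin n))) (hadj : ∀ s ∈ l, IsAdjTrans s) :
    invn l.prod ≤ l.length := by
  induction l using List.reverseRecOn with
  | nil => simp [invn_one]
  | append_singleton m t ih =>
    rw [List.prod_append, List.prod_singleton, List.length_append, List.length_singleton]
    obtain ⟨k, hk, rfl⟩ := hadj t (by simp)
    have ihm := ih (fun s hs => hadj s (by simp [hs]))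
    set v := m.prod with hv
    have hne : (v ⟨k, Nat.lt_of_succ_lt hk⟩).val ≠ (v ⟨k+1, hk⟩).val := by
      intro hEq
      have := v.injective (Fin.ext hEq : v _ = v _)
      simp only [Fin.mk.injEq] at this
      omega
    rcases Nat.lt_or_ge (v ⟨k, Nat.lt_of_succ_lt hk⟩).val (v ⟨k+1, hk⟩).val with hlt | hge
    · rw [invn_mul_swap_asc' v _ _ (by simp) hlt]
      omega
    · have := invn_mul_swap_desc' v ⟨k, Nat.lt_of_succ_lt hk⟩ ⟨k+1, hk⟩ (by simp) (by omega)
      omega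

lemma exists_word_invn (x : Perm (Fin n)) :
    ∃ l : List (Perm (Fin n)), l.length = invn x ∧ (∀ s ∈ l, IsAdjTrans s) ∧ l.prod = x := by
  generalize hN : invn x = N
  induction N using Nat.strong_induction_on generalizing x with
  | _ N ih =>
    rcases Nat.eq_zero_or_pos N with rfl | hpos
    · refine ⟨[], rfl, by simp, ?_⟩
      rw [List.prod_nil]
      symm
      apply eq_one_of_no_descent
      intro k hk
      by_contra hc
      push_neg at hc
      have hne : (x ⟨k, Nat.lt_of_succ_lt hk⟩).val ≠ (x ⟨k+1, hk⟩).val := by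
        intro hEq
        have := x.injective (Fin.ext hEq : x _ = x _)
        simp only [Fin.mk.injEq] at this
        omega
      have hdesc : (x ⟨k+1, hk⟩).val < (x ⟨k, Nat.lt_of_succ_lt hk⟩).val := by omega
      -- then (⟨k⟩,⟨k+1⟩) is an inversion, so invn x > 0
      have : ((⟨k, Nat.lt_of_succ_lt hk⟩, ⟨k+1, hk⟩) : Fin n × Fin n) ∈
          (univ.filter fun p : Fin n × Fin n => p.1 < p.2 ∧ x p.2 < x p.1) := by
        rw [mem_filter]
        exact ⟨mem_univ _, show (k:ℕ) < k+1 by omega, hdesc⟩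
      have : 0 < invn x := Finset.card_pos.mpr ⟨_, this⟩
      omega
    · -- find a descent
      have hx1 : x ≠ 1 := by
        rintro rfl
        rw [invn_one] at hN
        omega
      have hdesc : ∃ (k : ℕ) (hk : k + 1 < n),
          (x ⟨k+1, hk⟩).val < (x ⟨k, Nat.lt_of_succ_lt hk⟩).val := by
        by_contra hc
        push_neg at hc
        apply hx1
        apply eq_one_of_no_descent
        intro k hk
        have h1 := hc k hk
        have hne : (x ⟨k, Nat.lt_of_succ_lt hk⟩).val ≠ (x ⟨k+1, hk⟩).val := by
          intro hEq
          have := x.injective (Fin.ext hEq : x _ = x _)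
          simp only [Fin.mk.injEq] at this
          omega
        omega
      obtain ⟨k, hk, hd⟩ := hdesc
      set t := Equiv.swap (⟨k, Nat.lt_of_succ_lt hk⟩ : Fin n) ⟨k+1, hk⟩ with ht
      have hstep := invn_mul_swap_desc' x ⟨k, Nat.lt_of_succ_lt hk⟩ ⟨k+1, hk⟩ (by simp) hd
      rw [← ht] at hstep
      obtain ⟨m, hm1, hm2, hm3⟩ := ih (invn (x * t)) (by omega) (x * t) rfl
      refine ⟨m ++ [t], ?_, ?_, ?_⟩
      · rw [List.length_append, List.length_singleton]
        omega
      · intro s hs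
        rcases List.mem_append.mp hs with h | h
        · exact hm2 s h
        · rw [List.mem_singleton.mp h, ht]
          exact ⟨k, hk, rfl⟩
      · rw [List.prod_append, List.prod_singleton, hm3, mul_assoc, ht,
          Equiv.swap_mul_self, mul_one]

lemma len_eq_invn (x : Perm (Fin n)) : len x = invn x := by
  apply le_antisymm
  · obtain ⟨l, h1, h2, h3⟩ := exists_word_invn x
    exact Nat.sInf_le ⟨l, h1, h2, h3⟩
  · have hne : {m | ∃ l : List (Perm (Fin n)),
        l.length = m ∧ (∀ s ∈ l, IsAdjTrans s) ∧ l.prod = x}.Nonempty := by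
      obtain ⟨l, h1, h2, h3⟩ := exists_word_invn x
      exact ⟨invn x, l, h1, h2, h3⟩
    obtain ⟨l, hl1, hl2, hl3⟩ := Nat.sInf_mem hne
    calc invn x = invn l.prod := by rw [hl3]
      _ ≤ l.length := invn_le_of_word l hl2
      _ = len x := hl1

lemma exists_reduced (x : Perm (Fin n)) :
    ∃ l : List (Perm (Fin n)), (∀ s ∈ l, IsAdjTrans s) ∧ l.length = len x ∧ l.prod = x := by
  obtain ⟨l, h1, h2, h3⟩ := exists_word_invn x
  exact ⟨l, h2, by rw [h1, len_eq_invn], h3⟩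

lemma rnk_le_n (x : Perm (Fin n)) (a b : ℕ) : rnk x a b ≤ n := by
  calc rnk x a b ≤ (univ : Finset (Fin n)).card := Finset.card_filter_le _ _
    _ = n := by rw [Finset.card_univ, Fintype.card_fin]

lemma rnk_one (a b : ℕ) : rnk (1 : Perm (Fin n)) a b = min (min a b) n := by
  unfold rnk
  rw [show (univ.filter fun i' : Fin n => i'.val < a ∧ ((1 : Perm (Fin n)) i').val < b)
      = (univ.filter fun i' : Fin n => i'.val < min a b) from by
    ext i'
    rw [Finset.mem_filter, Finset.mem_filter]
    simp only [mem_filter, mem_univ, true_and, Perm.one_apply]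
    omega]
  rw [card_filter_val_lt]

lemma ehr_one {y : Perm (Fin n)} (h : Ehr y (1 : Perm (Fin n))) : y = 1 := by
  apply perm_eq_of_rnk_eq
  intro a b
  apply le_antisymm
  · rw [rnk_one]
    exact le_min (le_min (rnk_le_left _ _ _) (rnk_le_right _ _ _)) (rnk_le_n _ _ _)
  · exact h a b

lemma reduced_step {m : List (Perm (Fin n))} {k : ℕ} (hk : k + 1 < n)
    (hadjm : ∀ s ∈ m, IsAdjTrans s)
    (hred : m.length + 1 = len (m.prod * Equiv.swap (⟨k, Nat.lt_of_succ_lt hk⟩ : Fin n) ⟨k+1, hk⟩)) :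
    m.length = len m.prod ∧
      (m.prod ⟨k, Nat.lt_of_succ_lt hk⟩).val < (m.prod ⟨k+1, hk⟩).val := by
  set v := m.prod with hv
  have hlenv : len v ≤ m.length := Nat.sInf_le ⟨m, rfl, hadjm, rfl⟩
  rw [len_eq_invn] at hlenv hred
  have hne : (v ⟨k, Nat.lt_of_succ_lt hk⟩).val ≠ (v ⟨k+1, hk⟩).val := by
    intro hEq
    have := v.injective (Fin.ext hEq : v _ = v _)
    simp only [Fin.mk.injEq] at this
    omega
  rcases Nat.lt_or_ge (v ⟨k, Nat.lt_of_succ_lt hk⟩).val (v ⟨k+1, hk⟩).val with hasc | hge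
  · have := invn_mul_swap_asc' v _ _ (by simp) hasc
    rw [len_eq_invn]
    constructor
    · omega
    · exact hasc
  · have hdesc : (v ⟨k+1, hk⟩).val < (v ⟨k, Nat.lt_of_succ_lt hk⟩).val := by omega
    have := invn_mul_swap_desc' v ⟨k, Nat.lt_of_succ_lt hk⟩ ⟨k+1, hk⟩ (by simp) hdesc
    omega

lemma ehr_of_sublist (l : List (Perm (Fin n))) (hadj : ∀ s ∈ l, IsAdjTrans s)
    (hred : l.length = len l.prod) (l' : List (Perm (Fin n))) (hl' : l'.Sublist l) :
    Ehr l'.prod l.prod := by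
  induction l using List.reverseRecOn generalizing l' with
  | nil =>
    rw [List.sublist_nil.mp hl']
    exact ehr_refl _
  | append_singleton m t ih =>
    obtain ⟨k, hk, rfl⟩ := hadj t (by simp)
    have hadjm : ∀ s ∈ m, IsAdjTrans s := fun s hs => hadj s (by simp [hs])
    rw [List.prod_append, List.prod_singleton] at hred ⊢
    rw [List.length_append, List.length_singleton] at hred
    obtain ⟨hredm, hasc⟩ := reduced_step hk hadjm hred
    rw [List.sublist_append_iff] at hl'
    obtain ⟨l1, l2, rfl, h1, h2⟩ := hl'
    rw [List.prod_append]
    rcases List.sublist_singleton.mp h2 with rfl | rfl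
    · rw [List.prod_nil, mul_one]
      exact ehr_trans (ih hadjm hredm l1 h1) (ehr_L1 hk hasc (ehr_refl _))
    · rw [List.prod_singleton]
      exact ehr_L2 hk hasc (ih hadjm hredm l1 h1)

lemma sublist_of_ehr (N : ℕ) (l : List (Perm (Fin n))) (y : Perm (Fin n))
    (hlen : l.length ≤ N) (hadj : ∀ s ∈ l, IsAdjTrans s) (hred : l.length = len l.prod)
    (hy : Ehr y l.prod) : ∃ l' : List (Perm (Fin n)), l'.Sublist l ∧ l'.prod = y := by
  induction N generalizing l y with
  | zero =>
    have : l = [] := List.length_eq_zero_iff.mp (by omega)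
    subst this
    rw [List.prod_nil] at hy
    exact ⟨[], List.Sublist.refl _, by rw [List.prod_nil, ehr_one hy]⟩
  | succ N ih =>
    rcases l.eq_nil_or_concat' with rfl | ⟨m, t, rfl⟩
    · rw [List.prod_nil] at hy
      exact ⟨[], List.Sublist.refl _, by rw [List.prod_nil, ehr_one hy]⟩
    · obtain ⟨k, hk, rfl⟩ := hadj t (by simp)
      have hadjm : ∀ s ∈ m, IsAdjTrans s := fun s hs => hadj s (by simp [hs])
      rw [List.prod_append, List.prod_singleton] at hred hy
      rw [List.length_append, List.length_singleton] at hred hlen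
      obtain ⟨hredm, hasc⟩ := reduced_step hk hadjm hred
      set v := m.prod with hv
      set t := Equiv.swap (⟨k, Nat.lt_of_succ_lt hk⟩ : Fin n) ⟨k+1, hk⟩ with ht
      have htt : t * t = 1 := by rw [ht]; exact Equiv.swap_mul_self _ _
      have hyne : (y ⟨k, Nat.lt_of_succ_lt hk⟩).val ≠ (y ⟨k+1, hk⟩).val := by
        intro hEq
        have := y.injective (Fin.ext hEq : y _ = y _)
        simp only [Fin.mk.injEq] at this
        omega
      rcases Nat.lt_or_ge (y ⟨k, Nat.lt_of_succ_lt hk⟩).val (y ⟨k+1, hk⟩).val with hyasc | hyge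
      · have h3 := ehr_L3 hk hyasc hy
        rw [mul_assoc, ← ht, Equiv.swap_mul_self, mul_one] at h3
        obtain ⟨m', hm1, hm2⟩ := ih m y (by omega) hadjm hredm h3
        exact ⟨m', hm1.trans (List.sublist_append_left m [t]), hm2⟩
      · have hydesc : (y ⟨k+1, hk⟩).val < (y ⟨k, Nat.lt_of_succ_lt hk⟩).val := by omega
        have h4 := ehr_L4 hk hydesc hy
        rw [← ht, mul_assoc, htt, mul_one] at h4
        obtain ⟨m', hm1, hm2⟩ := ih m (y * t) (by omega) hadjm hredm h4
        refine ⟨m' ++ [t], List.Sublist.append hm1 (List.Sublist.refl [t]), ?_⟩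
        rw [List.prod_append, List.prod_singleton, hm2, mul_assoc, htt, mul_one]

lemma bruhat_iff_ehr {y w : Perm (Fin n)} : BruhatLE y w ↔ Ehr y w := by
  constructor
  · rintro ⟨l, hadj, hlen, hprod, l', hsub, rfl⟩
    subst hprod
    exact ehr_of_sublist l hadj hlen l' hsub
  · intro h
    obtain ⟨l, hadj, hlen, hprod⟩ := exists_reduced w
    obtain ⟨l', hsub, hprod'⟩ := sublist_of_ehr l.length l y (le_refl _) hadj (by rw [hprod, hlen]) (by rw [hprod]; exact h)
    exact ⟨l, hadj, hlen, hprod, l', hsub, hprod'⟩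

lemma succAbove_val {d : ℕ} (p : Fin (d+1)) (j : Fin d) :
    (p.succAbove j).val = if j.val < p.val then j.val else j.val + 1 := by
  unfold Fin.succAbove
  split_ifs with h1 h2 h3 <;> simp_all [Fin.lt_def] <;> omega

lemma hat_count {d : ℕ} {i : Fin (d+1)} {x : Perm (Fin (d+1))} {x' : Perm (Fin d)}
    (hx : IsHat i x x') (a b A B : ℕ)
    (hA : ∀ j : Fin d, (i.succAbove j).val < A ↔ j.val < a)
    (hB : ∀ v : Fin d, ((x i).succAbove v).val < B ↔ v.val < b) :
    rnk x A B = rnk x' a b + (if i.val < A ∧ (x i).val < B then 1 else 0) := by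
  have key : rnk x' a b =
      ((univ.filter fun i' : Fin (d+1) => i'.val < A ∧ (x i').val < B).erase i).card := by
    apply Finset.card_bij (fun j _ => i.succAbove j)
    · intro j hj
      rw [mem_filter] at hj
      obtain ⟨-, hj1, hj2⟩ := hj
      rw [Finset.mem_erase, mem_filter]
      refine ⟨Fin.succAbove_ne i j, mem_univ _, (hA j).mpr hj1, ?_⟩
      rw [hx j]
      exact (hB (x' j)).mpr hj2
    · intro j1 h1 j2 h2 hEq
      exact Fin.succAbove_right_injective hEq
    · intro i' hi'
      rw [Finset.mem_erase, mem_filter] at hi'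
      obtain ⟨hne, -, h1, h2⟩ := hi'
      obtain ⟨j, rfl⟩ := Fin.exists_succAbove_eq hne
      refine ⟨j, ?_, rfl⟩
      rw [mem_filter]
      refine ⟨mem_univ _, (hA j).mp h1, ?_⟩
      rw [hx j] at h2
      exact (hB (x' j)).mp h2
  rw [key]
  show (univ.filter fun i' : Fin (d+1) => i'.val < A ∧ (x i').val < B).card = _
  by_cases hmem : i ∈ univ.filter fun i' : Fin (d+1) => i'.val < A ∧ (x i').val < B
  · rw [if_pos (by rw [mem_filter] at hmem; exact hmem.2)]
    rw [Finset.card_erase_of_mem hmem]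
    have : 0 < (univ.filter fun i' : Fin (d+1) => i'.val < A ∧ (x i').val < B).card :=
      Finset.card_pos.mpr ⟨_, hmem⟩
    omega
  · rw [if_neg (by rw [mem_filter] at hmem; simpa using hmem)]
    rw [Finset.erase_eq_of_notMem hmem]
    omega

section HatH
variable {d : ℕ} {i : Fin (d+1)} {x : Perm (Fin (d+1))} {x' : Perm (Fin d)}

lemma hat_H1 (hx : IsHat i x x') {a b : ℕ} (ha : a ≤ i.val) (hb : b ≤ (x i).val) :
    rnk x a b = rnk x' a b := by
  rw [hat_count hx a b a b
      (fun j => by rw [succAbove_val]; split_ifs <;> omega)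
      (fun v => by rw [succAbove_val]; split_ifs <;> omega),
    if_neg (by omega)]
  omega

lemma hat_H2 (hx : IsHat i x x') {a b : ℕ} (ha : a ≤ i.val) (hb : (x i).val ≤ b) :
    rnk x a (b+1) = rnk x' a b := by
  rw [hat_count hx a b a (b+1)
      (fun j => by rw [succAbove_val]; split_ifs <;> omega)
      (fun v => by rw [succAbove_val]; have := (x' v).isLt; split_ifs <;> omega),
    if_neg (by omega)]
  omega

lemma hat_H3 (hx : IsHat i x x') {a b : ℕ} (ha : i.val ≤ a) (hb : b ≤ (x i).val) :
    rnk x (a+1) b = rnk x' a b := by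
  rw [hat_count hx a b (a+1) b
      (fun j => by rw [succAbove_val]; split_ifs <;> omega)
      (fun v => by rw [succAbove_val]; split_ifs <;> omega),
    if_neg (by omega)]
  omega

lemma hat_H4 (hx : IsHat i x x') {a b : ℕ} (ha : i.val ≤ a) (hb : (x i).val ≤ b) :
    rnk x (a+1) (b+1) = rnk x' a b + 1 := by
  rw [hat_count hx a b (a+1) (b+1)
      (fun j => by rw [succAbove_val]; split_ifs <;> omega)
      (fun v => by rw [succAbove_val]; have := (x' v).isLt; split_ifs <;> omega),
    if_pos (by omega)]

lemma ehr_hat {z : Perm (Fin (d+1))} {z' : Perm (Fin d)}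
    (hx : IsHat i x x') (hz : IsHat i z z') (heq : x i = z i) (h : Ehr x z) : Ehr x' z' := by
  intro a b
  have heqv : (x i).val = (z i).val := by rw [heq]
  rcases le_or_gt a i.val with ha | ha <;> rcases le_or_gt b (x i).val with hb | hb
  · rw [← hat_H1 hx ha hb, ← hat_H1 hz ha (by omega)]
    exact h a b
  · rw [← hat_H2 hx ha (by omega), ← hat_H2 hz ha (by omega)]
    exact h a (b+1)
  · rw [← hat_H3 hx (by omega) hb, ← hat_H3 hz (by omega) (by omega)]
    exact h (a+1) b
  · have e1 := hat_H4 hx (a := a) (b := b) (by omega) (by omega)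
    have e2 := hat_H4 hz (a := a) (b := b) (by omega) (by omega)
    have := h (a+1) (b+1)
    omega

lemma ehr_unhat {z : Perm (Fin (d+1))} {z' : Perm (Fin d)}
    (hx : IsHat i x x') (hz : IsHat i z z') (heq : x i = z i) (h : Ehr x' z') : Ehr x z := by
  intro A B
  have heqv : (x i).val = (z i).val := by rw [heq]
  rcases le_or_gt A i.val with hA | hA <;> rcases le_or_gt B (x i).val with hB | hB
  · rw [hat_H1 hx hA hB, hat_H1 hz hA (by omega)]
    exact h A B
  · obtain ⟨B0, rfl⟩ : ∃ B0, B = B0 + 1 := ⟨B - 1, by omega⟩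
    rw [hat_H2 hx hA (by omega), hat_H2 hz hA (by omega)]
    exact h A B0
  · obtain ⟨A0, rfl⟩ : ∃ A0, A = A0 + 1 := ⟨A - 1, by omega⟩
    rw [hat_H3 hx (by omega) hB, hat_H3 hz (by omega) (by omega)]
    exact h A0 B
  · obtain ⟨A0, rfl⟩ : ∃ A0, A = A0 + 1 := ⟨A - 1, by omega⟩
    obtain ⟨B0, rfl⟩ : ∃ B0, B = B0 + 1 := ⟨B - 1, by omega⟩
    rw [hat_H4 hx (by omega) (by omega), hat_H4 hz (by omega) (by omega)]
    have := h A0 B0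
    omega

end HatH

lemma invi_add_rnk (x : Perm (Fin n)) (i : Fin n) :
    invi x i + rnk x i.val (x i).val = i.val := by
  have hsplit : (univ.filter fun i' : Fin n => i' < i)
      = (univ.filter fun i' : Fin n => i' < i ∧ x i < x i')
        ∪ (univ.filter fun i' : Fin n => i' < i ∧ x i' < x i) := by
    ext i'
    simp only [mem_filter, mem_univ, true_and, mem_union]
    constructor
    · intro h
      rcases lt_trichotomy (x i') (x i) with h1 | h1 | h1
      · exact Or.inr ⟨h, h1⟩
      · exact absurd (x.injective h1) (ne_of_lt h)
      · exact Or.inl ⟨h, h1⟩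
    · rintro (⟨h, -⟩ | ⟨h, -⟩) <;> exact h
  have hdisj : Disjoint (univ.filter fun i' : Fin n => i' < i ∧ x i < x i')
      (univ.filter fun i' : Fin n => i' < i ∧ x i' < x i) := by
    rw [Finset.disjoint_left]
    intro i' h1 h2
    rw [mem_filter] at h1 h2
    exact absurd h1.2.2 (not_lt_of_gt h2.2.2)
  have hcard : ((univ : Finset (Fin n)).filter fun i' => i' < i).card = i.val := by
    rw [show ((univ : Finset (Fin n)).filter fun i' => i' < i)
        = ((univ : Finset (Fin n)).filter fun i' => i'.val < i.val) from by
      ext i'; simp only [mem_filter, Fin.lt_def]]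
    rw [card_filter_val_lt]
    have := i.isLt
    omega
  have hrnk : rnk x i.val (x i).val
      = ((univ : Finset (Fin n)).filter fun i' => i' < i ∧ x i' < x i).card := by
    unfold rnk
    congr 1
  rw [hsplit, Finset.card_union_of_disjoint hdisj] at hcard
  rw [hrnk]
  unfold invi
  omega

lemma rnk_add_Invi (x : Perm (Fin n)) (i : Fin n) :
    rnk x i.val (x i).val + Invi x i = (x i).val := by
  have hsplit : (univ.filter fun i' : Fin n => x i' < x i)
      = (univ.filter fun i' : Fin n => i' < i ∧ x i' < x i)
        ∪ (univ.filter fun i' : Fin n => i < i' ∧ x i' < x i) := by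
    ext i'
    simp only [mem_filter, mem_univ, true_and, mem_union]
    constructor
    · intro h
      rcases lt_trichotomy i' i with h1 | h1 | h1
      · exact Or.inl ⟨h1, h⟩
      · subst h1; exact absurd h (lt_irrefl _)
      · exact Or.inr ⟨h1, h⟩
    · rintro (⟨-, h⟩ | ⟨-, h⟩) <;> exact h
  have hdisj : Disjoint (univ.filter fun i' : Fin n => i' < i ∧ x i' < x i)
      (univ.filter fun i' : Fin n => i < i' ∧ x i' < x i) := by
    rw [Finset.disjoint_left]
    intro i' h1 h2
    rw [mem_filter] at h1 h2
    exact absurd h1.2.1 (not_lt_of_gt h2.2.1)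
  have hcard : ((univ : Finset (Fin n)).filter fun i' => x i' < x i).card = (x i).val := by
    rw [show ((univ : Finset (Fin n)).filter fun i' => x i' < x i)
        = ((univ : Finset (Fin n)).filter fun i' => (x i').val < (x i).val) from by
      ext i'; simp only [mem_filter, Fin.lt_def]]
    rw [card_filter_apply_val_lt]
    have := (x i).isLt
    omega
  have hrnk : rnk x i.val (x i).val
      = ((univ : Finset (Fin n)).filter fun i' => i' < i ∧ x i' < x i).card := by
    unfold rnk
    congr 1
  rw [hsplit, Finset.card_union_of_disjoint hdisj] at hcard
  rw [hrnk]
  unfold Invi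
  omega

lemma Invi_eq_of {x z : Perm (Fin n)} {i : Fin n} (h1 : x i = z i)
    (h2 : invi x i = invi z i) : Invi x i = Invi z i := by
  have a1 := invi_add_rnk x i
  have a2 := invi_add_rnk z i
  have b1 := rnk_add_Invi x i
  have b2 := rnk_add_Invi z i
  have hv : (x i).val = (z i).val := by rw [h1]
  rw [hv] at a1 b1
  omega

lemma invn_hat {d : ℕ} {i : Fin (d+1)} {x : Perm (Fin (d+1))} {x' : Perm (Fin d)}
    (hx : IsHat i x x') : invn x = invn x' + invi x i + Invi x i := by
  set S := univ.filter fun p : Fin (d+1) × Fin (d+1) => p.1 < p.2 ∧ x p.2 < x p.1 with hS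
  have c1 := Finset.card_filter_add_card_filter_not (s := S) (p := fun p => p.2 = i)
  have c2 := Finset.card_filter_add_card_filter_not
    (s := S.filter fun p => ¬(p.2 = i)) (p := fun p => p.1 = i)
  have eA : (S.filter fun p => p.2 = i).card = invi x i := by
    apply Finset.card_bij (fun p _ => p.1)
    · rintro ⟨p1, p2⟩ hp
      rw [mem_filter, hS, mem_filter] at hp
      obtain ⟨⟨-, hlt, hinv⟩, hp2⟩ := hp
      simp only at hp2
      subst hp2
      rw [mem_filter]
      exact ⟨mem_univ _, hlt, hinv⟩
    · rintro ⟨p1, p2⟩ hp ⟨q1, q2⟩ hq hEq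
      rw [mem_filter] at hp hq
      simp only at hEq hp hq
      rw [Prod.ext_iff]
      exact ⟨hEq, by rw [hp.2, hq.2]⟩
    · intro i' hi'
      rw [mem_filter] at hi'
      obtain ⟨-, hlt, hinv⟩ := hi'
      refine ⟨(i', i), ?_, rfl⟩
      rw [mem_filter, hS, mem_filter]
      exact ⟨⟨mem_univ _, hlt, hinv⟩, rfl⟩
  have eB : ((S.filter fun p => ¬(p.2 = i)).filter fun p => p.1 = i).card = Invi x i := by
    apply Finset.card_bij (fun p _ => p.2)
    · rintro ⟨p1, p2⟩ hp
      rw [mem_filter, mem_filter, hS, mem_filter] at hp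
      obtain ⟨⟨⟨-, hlt, hinv⟩, -⟩, hp1⟩ := hp
      simp only at hp1
      subst hp1
      rw [mem_filter]
      exact ⟨mem_univ _, hlt, hinv⟩
    · rintro ⟨p1, p2⟩ hp ⟨q1, q2⟩ hq hEq
      rw [mem_filter] at hp hq
      simp only at hEq hp hq
      rw [Prod.ext_iff]
      exact ⟨by rw [hp.2, hq.2], hEq⟩
    · intro i' hi'
      rw [mem_filter] at hi'
      obtain ⟨-, hlt, hinv⟩ := hi'
      refine ⟨(i, i'), ?_, rfl⟩
      rw [mem_filter, mem_filter, hS, mem_filter]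
      refine ⟨⟨⟨mem_univ _, hlt, hinv⟩, fun h => ?_⟩, rfl⟩
      have h' : i' = i := h
      subst h'
      exact absurd hlt (lt_irrefl _)
  have eC : ((S.filter fun p => ¬(p.2 = i)).filter fun p => ¬(p.1 = i)).card = invn x' := by
    symm
    apply Finset.card_bij (fun (q : Fin d × Fin d) _ => (i.succAbove q.1, i.succAbove q.2))
    · rintro ⟨q1, q2⟩ hq
      rw [mem_filter] at hq
      obtain ⟨-, hlt, hinv⟩ := hq
      simp only
      rw [mem_filter, mem_filter, hS, mem_filter]
      refine ⟨⟨⟨mem_univ _, ?_, ?_⟩, ?_⟩, ?_⟩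
      · exact Fin.succAbove_lt_succAbove_iff.mpr hlt
      · rw [hx q1, hx q2]
        exact Fin.succAbove_lt_succAbove_iff.mpr hinv
      · exact Fin.succAbove_ne i q2
      · exact Fin.succAbove_ne i q1
    · rintro ⟨q1, q2⟩ hq ⟨r1, r2⟩ hr hEq
      rw [Prod.ext_iff] at hEq ⊢
      simp only at hEq
      exact ⟨Fin.succAbove_right_injective hEq.1, Fin.succAbove_right_injective hEq.2⟩
    · rintro ⟨p1, p2⟩ hp
      rw [mem_filter, mem_filter, hS, mem_filter] at hp
      obtain ⟨⟨⟨-, hlt, hinv⟩, hne2⟩, hne1⟩ := hp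
      simp only at hne1 hne2
      obtain ⟨q1, rfl⟩ := Fin.exists_succAbove_eq hne1
      obtain ⟨q2, rfl⟩ := Fin.exists_succAbove_eq hne2
      refine ⟨(q1, q2), ?_, rfl⟩
      rw [mem_filter]
      refine ⟨mem_univ _, ?_, ?_⟩
      · exact Fin.succAbove_lt_succAbove_iff.mp hlt
      · rw [hx q1, hx q2] at hinv
        exact Fin.succAbove_lt_succAbove_iff.mp hinv
  show S.card = _
  omega

lemma rnk_skip (x : Perm (Fin n)) (i : Fin n) (a : ℕ) (ha : a ≤ i.val) :
    rnk x a ((x i).val + 1) = rnk x a (x i).val := by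
  unfold rnk
  congr 1
  ext i'
  simp only [mem_filter, mem_univ, true_and]
  constructor
  · rintro ⟨h1, h2⟩
    refine ⟨h1, ?_⟩
    have hne : (x i').val ≠ (x i).val := by
      intro hEq
      have : i' = i := x.injective (Fin.ext hEq)
      subst this
      omega
    omega
  · rintro ⟨h1, h2⟩
    exact ⟨h1, by omega⟩

lemma pinch {d : ℕ} {y w x : Perm (Fin (d+1))} {i : Fin (d+1)}
    (hval : y i = w i) (hinv : invi y i = invi w i)
    (hyx : Ehr y x) (hxw : Ehr x w) : x i = y i ∧ invi x i = invi y i := by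
  have hv : (y i).val = (w i).val := by rw [hval]
  have ay := invi_add_rnk y i
  have aw := invi_add_rnk w i
  have ax := invi_add_rnk x i
  have sy := rnk_skip y i i.val (le_refl _)
  have sw := rnk_skip w i i.val (le_refl _)
  have e1y := rnk_succ y i.val ((y i).val+1)
  have e2y := rnk_succ y i.val ((y i).val)
  have e1w := rnk_succ w i.val ((y i).val+1)
  have e2w := rnk_succ w i.val ((y i).val)
  have e1x := rnk_succ x i.val ((y i).val+1)
  have e2x := rnk_succ x i.val ((y i).val)
  rw [dif_pos i.isLt] at e1y e2y e1w e2w e1x e2x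
  simp only [Fin.eta] at e1y e2y e1w e2w e1x e2x
  rw [if_pos (by omega : (y i).val < (y i).val + 1)] at e1y
  rw [if_neg (by omega : ¬ (y i).val < (y i).val)] at e2y
  rw [if_pos (by omega : (w i).val < (y i).val + 1)] at e1w
  rw [if_neg (by omega : ¬ (w i).val < (y i).val)] at e2w
  rw [← hv] at sw aw
  have p1 := hyx (i.val+1) ((y i).val+1)
  have p2 := hxw (i.val+1) ((y i).val+1)
  have p3 := hyx (i.val+1) ((y i).val)
  have p4 := hxw (i.val+1) ((y i).val)
  have p5 := hyx i.val ((y i).val+1)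
  have p6 := hxw i.val ((y i).val+1)
  have p7 := hyx i.val ((y i).val)
  have p8 := hxw i.val ((y i).val)
  have hxval : (x i).val = (y i).val := by
    split_ifs at e1x e2x <;> omega
  refine ⟨Fin.ext hxval, ?_⟩
  rw [hxval] at ax
  omega

lemma exists_hat {d : ℕ} (i : Fin (d+1)) (x : Perm (Fin (d+1))) : ∃ x', IsHat i x x' := by
  set e : Option (Fin d) ≃ Option (Fin d) :=
    (finSuccEquiv' i).symm.trans (x.trans (finSuccEquiv' (x i))) with he
  have hnone : e none = none := by
    show finSuccEquiv' (x i) (x ((finSuccEquiv' i).symm none)) = none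
    rw [finSuccEquiv'_symm_none, finSuccEquiv'_at]
  refine ⟨e.removeNone, ?_⟩
  intro j
  have h2 : e (some j) = finSuccEquiv' (x i) (x (i.succAbove j)) := by
    show finSuccEquiv' (x i) (x ((finSuccEquiv' i).symm (some j))) = _
    rw [finSuccEquiv'_symm_some]
  have hne : ∃ x'', e (some j) = some x'' := by
    cases hcase : e (some j) with
    | none =>
      exfalso
      have : (some j : Option (Fin d)) = none := e.injective (by rw [hcase, hnone])
      exact Option.some_ne_none j this
    | some v => exact ⟨v, rfl⟩
  have h3 : some (e.removeNone j) = e (some j) := Equiv.removeNone_some e hne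
  rw [h2] at h3
  have h4 := congrArg (finSuccEquiv' (x i)).symm h3
  rw [Equiv.symm_apply_apply, finSuccEquiv'_symm_some] at h4
  exact h4.symm

lemma exists_unhat {d : ℕ} (i c : Fin (d+1)) (z : Perm (Fin d)) :
    ∃ x : Perm (Fin (d+1)), x i = c ∧ IsHat i x z := by
  set x : Perm (Fin (d+1)) :=
    ((finSuccEquiv' i).trans (Equiv.optionCongr z)).trans (finSuccEquiv' c).symm with hx
  have hxi : x i = c := by
    show (finSuccEquiv' c).symm (Equiv.optionCongr z (finSuccEquiv' i i)) = c
    rw [finSuccEquiv'_at]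
    show (finSuccEquiv' c).symm (Option.map z none) = c
    rw [Option.map_none, finSuccEquiv'_symm_none]
  refine ⟨x, hxi, ?_⟩
  intro j
  rw [hxi]
  show (finSuccEquiv' c).symm (Equiv.optionCongr z (finSuccEquiv' i (i.succAbove j)))
    = c.succAbove (z j)
  rw [finSuccEquiv'_succAbove]
  show (finSuccEquiv' c).symm (Option.map z (some j)) = c.succAbove (z j)
  rw [Option.map_some, finSuccEquiv'_symm_some]

end CancelAux

/-- if `i` is cancellable for `[y,w]`, then `x ↦ x^{î}` is a poset isomorphism
from the Bruhat interval `[y,w]` in `S_d` onto `[y^{î}, w^{î}]` in `S_{d-1}`, reducing all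
lengths by the same amount. -/
theorem stmt6 (d : ℕ) (y w : Perm (Fin (d + 1))) (i : Fin (d + 1))
    (hyw : BruhatLE y w) (hval : y i = w i) (hinv : invi y i = invi w i)
    (y' w' : Perm (Fin d)) (hy' : IsHat i y y') (hw' : IsHat i w w') :
    -- the map is total on the interval
    (∀ x, BruhatLE y x → BruhatLE x w → ∃ x', IsHat i x x') ∧
    -- it maps into [y^î, w^î] and reduces all lengths by the same amount
    (∀ x x', BruhatLE y x → BruhatLE x w → IsHat i x x' →
      BruhatLE y' x' ∧ BruhatLE x' w' ∧ len x' + len y = len x + len y') ∧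
    -- it is order-preserving and order-reflecting
    (∀ x₁ x₂ x₁' x₂', BruhatLE y x₁ → BruhatLE x₁ w → BruhatLE y x₂ → BruhatLE x₂ w →
      IsHat i x₁ x₁' → IsHat i x₂ x₂' → (BruhatLE x₁ x₂ ↔ BruhatLE x₁' x₂')) ∧
    -- it is surjective onto [y^î, w^î]
    (∀ z, BruhatLE y' z → BruhatLE z w' →
      ∃ x, BruhatLE y x ∧ BruhatLE x w ∧ IsHat i x z) := by
  have hlen : ∀ (x : Perm (Fin (d+1))) (x' : Perm (Fin d)), IsHat i x x' →
      len x = len x' + invi x i + Invi x i := by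
    intro x x' hx
    rw [len_eq_invn, len_eq_invn, invn_hat hx]
  refine ⟨?_, ?_, ?_, ?_⟩
  · intro x _ _
    exact exists_hat i x
  · intro x x' hyx hxw hx
    obtain ⟨hxi, hxinvi⟩ := pinch hval hinv (bruhat_iff_ehr.mp hyx) (bruhat_iff_ehr.mp hxw)
    have hxInvi : Invi x i = Invi y i := Invi_eq_of hxi hxinvi
    refine ⟨?_, ?_, ?_⟩
    · exact bruhat_iff_ehr.mpr (ehr_hat hy' hx hxi.symm (bruhat_iff_ehr.mp hyx))
    · exact bruhat_iff_ehr.mpr (ehr_hat hx hw' (hxi.trans hval) (bruhat_iff_ehr.mp hxw))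
    · have l1 := hlen x x' hx
      have l2 := hlen y y' hy'
      rw [hxinvi, hxInvi] at l1
      omega
  · intro x1 x2 x1' x2' hyx1 hx1w hyx2 hx2w h1 h2
    obtain ⟨e1, -⟩ := pinch hval hinv (bruhat_iff_ehr.mp hyx1) (bruhat_iff_ehr.mp hx1w)
    obtain ⟨e2, -⟩ := pinch hval hinv (bruhat_iff_ehr.mp hyx2) (bruhat_iff_ehr.mp hx2w)
    constructor
    · intro h
      exact bruhat_iff_ehr.mpr (ehr_hat h1 h2 (e1.trans e2.symm) (bruhat_iff_ehr.mp h))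
    · intro h
      exact bruhat_iff_ehr.mpr (ehr_unhat h1 h2 (e1.trans e2.symm) (bruhat_iff_ehr.mp h))
  · intro z hy'z hzw'
    obtain ⟨x, hxi, hxz⟩ := exists_unhat i (y i) z
    refine ⟨x, ?_, ?_, hxz⟩
    · exact bruhat_iff_ehr.mpr (ehr_unhat hy' hxz hxi.symm (bruhat_iff_ehr.mp hy'z))
    · exact bruhat_iff_ehr.mpr (ehr_unhat hxz hw' (hxi.trans hval) (bruhat_iff_ehr.mp hzw'))
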